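/- arXiv:0710.1530 — 2 statements merged into one kernel-verified Lean document; each statement's English description precedes it below -/
import Mathlib

section
/- Let A, B, S be nonsingular n×n complex matrices and let S = WQ be a right polar decomposition of S (W unitary, Q positive definite Hermitian). Then A and B are unitarily *congruent if and only if there is a nonsingular matrix S such that A = SBS* and A⁻* = SB⁻*S*. In fact, if A = SBS* and A⁻* = SB⁻*S* with S = WQ, then A = WBW* and A⁻* = WB⁻*W*. -/
open Matrix
open scoped ComplexOrder


lemma diag_step {n : ℕ} (d : Fin n → ℝ) (hd : ∀ i, 0 < d i) (C : Matrix (Fin n) (Fin n) ℂ)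
    (h : ∀ i j, ((d i : ℂ) * (d i)) * C i j * ((d j : ℂ) * (d j)) = C i j) :
    ∀ i j, (d i : ℂ) * C i j * (d j : ℂ) = C i j := by
  intro i j
  rcases eq_or_ne (C i j) 0 with h0 | h0
  · simp [h0]
  · have hij := h i j
    have h1 : (((d i * d j : ℝ) : ℂ) ^ 2 - 1) * C i j = 0 := by
      push_cast
      ring_nf
      ring_nf at hij
      linear_combination hij
    rcases mul_eq_zero.mp h1 with h2 | h2
    · have h3 : ((d i * d j : ℝ) : ℂ) ^ 2 = 1 := by linear_combination h2
      have h4 : (d i * d j) ^ 2 = (1 : ℝ) := by exact_mod_cast h3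
      have hpos : 0 < d i * d j := mul_pos (hd i) (hd j)
      have h5 : d i * d j = 1 := by
        rcases sq_eq_one_iff.mp h4 with h | h
        · exact h
        · linarith
      have h6 : (d i : ℂ) * (d j : ℂ) = 1 := by exact_mod_cast congrArg (fun x : ℝ => (x : ℂ)) h5
      linear_combination C i j * h6
    · exact absurd h2 h0

lemma key {n : ℕ} {Q M : Matrix (Fin n) (Fin n) ℂ} (hQ : Q.PosDef)
    (h : Q * Q * M * (Q * Q) = M) : Q * M * Q = M := by
  set V : Matrix (Fin n) (Fin n) ℂ := (hQ.1.eigenvectorUnitary : Matrix (Fin n) (Fin n) ℂ) with hVdef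
  have hV1 : Vᴴ * V = 1 := by
    simpa [Matrix.star_eq_conjTranspose] using mem_unitaryGroup_iff'.mp (hQ.1.eigenvectorUnitary).2
  have hV2 : V * Vᴴ = 1 := by
    simpa [Matrix.star_eq_conjTranspose] using mem_unitaryGroup_iff.mp (hQ.1.eigenvectorUnitary).2
  have cancel1 : ∀ X : Matrix (Fin n) (Fin n) ℂ, Vᴴ * (V * X) = X := fun X => by
    rw [← Matrix.mul_assoc, hV1, Matrix.one_mul]
  have cancel2 : ∀ X : Matrix (Fin n) (Fin n) ℂ, V * (Vᴴ * X) = X := fun X => by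
    rw [← Matrix.mul_assoc, hV2, Matrix.one_mul]
  set d : Fin n → ℝ := hQ.1.eigenvalues with hddef
  set D : Matrix (Fin n) (Fin n) ℂ := diagonal (fun i => (d i : ℂ)) with hDdef
  have hspec : Q = V * D * Vᴴ := by
    have := hQ.1.spectral_theorem
    rw [this]
    rfl
  set C : Matrix (Fin n) (Fin n) ℂ := Vᴴ * (M * V) with hCdef
  have hM : M = V * (C * Vᴴ) := by
    rw [hCdef]
    simp only [Matrix.mul_assoc, cancel2, hV2, Matrix.mul_one]
  have h2 : V * (D * (D * (C * (D * (D * Vᴴ))))) = V * (C * Vᴴ) := by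
    conv_rhs => rw [← hM, ← h, hspec]
    conv_rhs => rw [hM]
    simp only [Matrix.mul_assoc, cancel1, cancel2]
  have h3 := congrArg (fun X => Vᴴ * X * V) h2
  simp only [Matrix.mul_assoc, cancel1, hV1, Matrix.mul_one] at h3
  -- h3 : D * (D * (C * (D * D))) = C
  have h4 : ∀ i j, ((d i : ℂ) * (d i)) * C i j * ((d j : ℂ) * (d j)) = C i j := by
    intro i j
    have := congrFun (congrFun h3 i) j
    simp only [hDdef, Matrix.diagonal_mul, Matrix.mul_diagonal, Matrix.diagonal_mul_diagonal] at this
    linear_combination this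
  have h5 := diag_step d (fun i => hQ.eigenvalues_pos i) C h4
  have hDCD : D * (C * D) = C := by
    ext i j
    simp only [hDdef, Matrix.diagonal_mul, Matrix.mul_diagonal]
    linear_combination h5 i j
  rw [hspec, hM]
  simp only [Matrix.mul_assoc, cancel1, cancel2]
  rw [show D * (C * (D * Vᴴ)) = D * (C * D) * Vᴴ by simp only [Matrix.mul_assoc], hDCD]

lemma part2 {n : ℕ} (A B S W Q : Matrix (Fin n) (Fin n) ℂ)
    (hB : IsUnit B.det) (hS : IsUnit S.det) (hW : Wᴴ * W = 1) (hQ : Q.PosDef)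
    (hWQ : S = W * Q) (h1 : A = S * B * Sᴴ) (h2 : (A⁻¹)ᴴ = S * (B⁻¹)ᴴ * Sᴴ) :
    A = W * B * Wᴴ ∧ (A⁻¹)ᴴ = W * (B⁻¹)ᴴ * Wᴴ := by
  have hQH : Qᴴ = Q := hQ.1
  have hQd : IsUnit Q.det := hQ.det_pos.ne'.isUnit
  have cW : ∀ X : Matrix (Fin n) (Fin n) ℂ, Wᴴ * (W * X) = X := fun X => by
    rw [← Matrix.mul_assoc, hW, Matrix.one_mul]
  have hSS : Sᴴ * S = Q * Q := by
    rw [hWQ]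
    simp only [Matrix.conjTranspose_mul, Matrix.mul_assoc, cW, hQH]
  have hAinv : (A⁻¹)ᴴ = (S⁻¹)ᴴ * ((B⁻¹)ᴴ * S⁻¹) := by
    rw [h1, Matrix.mul_inv_rev, Matrix.mul_inv_rev]
    simp only [Matrix.conjTranspose_mul, Matrix.conjTranspose_nonsing_inv,
      Matrix.conjTranspose_conjTranspose, Matrix.mul_assoc]
  have e3 : S * ((B⁻¹)ᴴ * Sᴴ) = (S⁻¹)ᴴ * ((B⁻¹)ᴴ * S⁻¹) := by
    rw [← hAinv, h2, Matrix.mul_assoc]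
  have e5 : Q * Q * ((B⁻¹)ᴴ * (Q * Q)) = (B⁻¹)ᴴ := by
    calc Q * Q * ((B⁻¹)ᴴ * (Q * Q)) = (Sᴴ * S) * ((B⁻¹)ᴴ * (Sᴴ * S)) := by rw [hSS]
    _ = Sᴴ * ((S * ((B⁻¹)ᴴ * Sᴴ)) * S) := by simp only [Matrix.mul_assoc]
    _ = Sᴴ * (((S⁻¹)ᴴ * ((B⁻¹)ᴴ * S⁻¹)) * S) := by rw [e3]
    _ = (B⁻¹)ᴴ := by
        simp only [Matrix.mul_assoc, Matrix.nonsing_inv_mul S hS, Matrix.mul_one]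
        rw [← Matrix.mul_assoc, ← Matrix.conjTranspose_mul, Matrix.nonsing_inv_mul S hS,
          Matrix.conjTranspose_one, Matrix.one_mul]
  have e6 : Q * (B⁻¹)ᴴ * Q = (B⁻¹)ᴴ := key hQ (by simpa only [Matrix.mul_assoc] using e5)
  have e7 : Q * B⁻¹ * Q = B⁻¹ := by
    have := congrArg Matrix.conjTranspose e6
    simpa [Matrix.conjTranspose_mul, hQH, Matrix.mul_assoc] using this
  have h9 : Q⁻¹ * (B * Q⁻¹) = B := by
    have := congrArg (fun X => X⁻¹) e7
    simpa only [Matrix.mul_inv_rev, Matrix.nonsing_inv_nonsing_inv B hB,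
      Matrix.mul_assoc] using this
  have e8 : Q * B * Q = B := by
    calc Q * B * Q = Q * (Q⁻¹ * (B * Q⁻¹)) * Q := by rw [h9]
    _ = B := by
        rw [Matrix.mul_nonsing_inv_cancel_left _ _ hQd,
          Matrix.nonsing_inv_mul_cancel_right _ _ hQd]
  constructor
  · rw [h1, hWQ]
    calc W * Q * B * (W * Q)ᴴ = W * (Q * B * Q) * Wᴴ := by
          simp only [Matrix.conjTranspose_mul, hQH, Matrix.mul_assoc]
    _ = W * B * Wᴴ := by rw [e8]
  · rw [h2, hWQ]
    calc W * Q * (B⁻¹)ᴴ * (W * Q)ᴴ = W * (Q * (B⁻¹)ᴴ * Q) * Wᴴ := by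
          simp only [Matrix.conjTranspose_mul, hQH, Matrix.mul_assoc]
    _ = W * (B⁻¹)ᴴ * Wᴴ := by rw [e6]

lemma posDef_ctm {n : ℕ} {T : Matrix (Fin n) (Fin n) ℂ} (hT : IsUnit T.det) :
    (Tᴴ * T).PosDef := by
  have hTu : IsUnit T := (isUnit_iff_isUnit_det T).mpr hT
  have hTHu : IsUnit Tᴴ := by simpa [star_eq_conjTranspose] using hTu.star
  exact (posSemidef_conjTranspose_mul_self T).posDef_iff_isUnit.mpr (hTHu.mul hTu)

lemma posDef_of_posSemidef_isUnit {n : ℕ} {P : Matrix (Fin n) (Fin n) ℂ}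
    (hP : P.PosSemidef) (hPd : IsUnit P.det) : P.PosDef := by
  exact hP.posDef_iff_isUnit.mpr ((isUnit_iff_isUnit_det P).mpr hPd)

open scoped MatrixOrder in
lemma exists_psd_sqrt {n : ℕ} {P : Matrix (Fin n) (Fin n) ℂ} (hP : P.PosSemidef) :
    ∃ R : Matrix (Fin n) (Fin n) ℂ, R.PosSemidef ∧ R * R = P :=
  ⟨CFC.sqrt P, (CFC.sqrt_nonneg P).posSemidef, CFC.sqrt_mul_sqrt_self P hP.nonneg⟩

/-- Criterion for unitary *congruence: nonsingular `A` and `B` are unitarily *congruent iff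
the pairs `(A, A⁻*)` and `(B, B⁻*)` are *congruent; moreover, if the *congruence is achieved
by `S` with right polar decomposition `S = WQ`, then it is achieved by the unitary `W`. -/
theorem stmt_9 {n : ℕ} (A B S W Q : Matrix (Fin n) (Fin n) ℂ)
    (hA : IsUnit A.det) (hB : IsUnit B.det) (hS : IsUnit S.det)
    (hW : Wᴴ * W = 1) (hQ : Q.PosDef) (hWQ : S = W * Q) :
    ((∃ U : Matrix (Fin n) (Fin n) ℂ, Uᴴ * U = 1 ∧ A = U * B * Uᴴ) ↔
      ∃ T : Matrix (Fin n) (Fin n) ℂ, IsUnit T.det ∧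
        A = T * B * Tᴴ ∧ (A⁻¹)ᴴ = T * (B⁻¹)ᴴ * Tᴴ) ∧
    ((A = S * B * Sᴴ ∧ (A⁻¹)ᴴ = S * (B⁻¹)ᴴ * Sᴴ) →
      (A = W * B * Wᴴ ∧ (A⁻¹)ᴴ = W * (B⁻¹)ᴴ * Wᴴ)) := by
  constructor
  · constructor
    · rintro ⟨U, hU, hAU⟩
      have hUd : IsUnit U.det := by
        have h1 : U.det * Uᴴ.det = 1 := by
          rw [mul_comm, ← Matrix.det_mul, hU, Matrix.det_one]
        exact IsUnit.of_mul_eq_one _ h1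
      have hUHinv : (Uᴴ)⁻¹ = U := Matrix.inv_eq_right_inv hU
      have hUinv : U⁻¹ = Uᴴ := Matrix.inv_eq_left_inv hU
      refine ⟨U, hUd, hAU, ?_⟩
      rw [hAU, Matrix.mul_inv_rev, Matrix.mul_inv_rev, hUHinv, hUinv]
      simp only [Matrix.conjTranspose_mul, Matrix.conjTranspose_conjTranspose,
        Matrix.mul_assoc]
    · rintro ⟨T, hT, eq1, eq2⟩
      have hP : (Tᴴ * T).PosDef := posDef_ctm hT
      obtain ⟨Q', hQ'ps0, hQ'sq0⟩ := exists_psd_sqrt hP.posSemidef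
      have hQ'ps : Q'.PosSemidef := hQ'ps0
      have hQ'sq : Q' * Q' = Tᴴ * T := hQ'sq0
      have hQ'd : IsUnit Q'.det := by
        have h1 : Q'.det * Q'.det = Tᴴ.det * T.det := by
          rw [← Matrix.det_mul, ← Matrix.det_mul, hQ'sq]
        have h2 : IsUnit (Q'.det * Q'.det) := by
          rw [h1]
          exact (by simpa [Matrix.det_conjTranspose] using hT.star : IsUnit Tᴴ.det).mul hT
        exact isUnit_of_mul_isUnit_left h2
      have hQ'pd : Q'.PosDef := posDef_of_posSemidef_isUnit hQ'ps hQ'd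
      have hQ'H : Q'ᴴ = Q' := hQ'ps.1
      set W' : Matrix (Fin n) (Fin n) ℂ := T * Q'⁻¹ with hW'def
      have hTW : T = W' * Q' := by
        rw [hW'def, Matrix.nonsing_inv_mul_cancel_right _ _ hQ'd]
      have hW' : W'ᴴ * W' = 1 := by
        rw [hW'def]
        have hinvH : (Q'⁻¹)ᴴ = Q'⁻¹ := by
          rw [Matrix.conjTranspose_nonsing_inv, hQ'H]
        calc (T * Q'⁻¹)ᴴ * (T * Q'⁻¹) = (Q'⁻¹)ᴴ * (Tᴴ * T) * Q'⁻¹ := by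
              simp only [Matrix.conjTranspose_mul, Matrix.mul_assoc]
        _ = Q'⁻¹ * (Q' * Q') * Q'⁻¹ := by rw [hinvH, hQ'sq]
        _ = 1 := by
              rw [Matrix.nonsing_inv_mul_cancel_left _ _ hQ'd,
                Matrix.mul_nonsing_inv _ hQ'd]
      obtain ⟨hA1, _⟩ := part2 A B T W' Q' hB hT hW' hQ'pd hTW eq1 eq2
      exact ⟨W', hW', hA1⟩
  · rintro ⟨h1, h2⟩
    exact part2 A B S W Q hB hS hW hQ hWQ h1 h2
end

section
/- Let A and B be n×n complex matrices. (a) If A and B are either both unitary or both coninvolutory, then A and B are unitarily congruent if and only if they are congruent. (b) If A and B are either both unitary or both involutory, then A and B are unitarily *congruent if and only if they are *congruent. -/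
open Matrix Polynomial


lemma aeval_transpose' {n : ℕ} (X : Matrix (Fin n) (Fin n) ℂ) (p : ℂ[X]) :
    (aeval X p)ᵀ = aeval Xᵀ p := by
  induction p using Polynomial.induction_on' with
  | add p q hp hq => simp [map_add, transpose_add, hp, hq]
  | monomial k a =>
      simp [aeval_monomial, ← Algebra.smul_def, transpose_smul, transpose_pow]

lemma aeval_conj' {n : ℕ} (M N X : Matrix (Fin n) (Fin n) ℂ) (hMN : M * N = 1)
    (hNM : N * M = 1) (p : ℂ[X]) : aeval (M * X * N) p = M * aeval X p * N := by
  have hpow : ∀ k : ℕ, (M * X * N) ^ k = M * X ^ k * N := by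
    intro k
    induction k with
    | zero => simp [hMN]
    | succ k ih =>
        rw [pow_succ, ih, pow_succ]
        calc M * X ^ k * N * (M * X * N) = M * X ^ k * (N * M) * X * N := by
              simp only [Matrix.mul_assoc]
          _ = M * (X ^ k * X) * N := by rw [hNM]; simp only [Matrix.mul_assoc, Matrix.mul_one]
  induction p using Polynomial.induction_on' with
  | add p q hp hq => simp [map_add, hp, hq, Matrix.mul_add, Matrix.add_mul]
  | monomial k a =>
      simp [aeval_monomial, ← Algebra.smul_def, hpow, Matrix.mul_smul, Matrix.smul_mul]

lemma aeval_diagonal' {n : ℕ} (d : Fin n → ℂ) (p : ℂ[X]) :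
    aeval (Matrix.diagonal d) p = Matrix.diagonal (fun i => p.eval (d i)) := by
  let F : (Fin n → ℂ) →ₐ[ℂ] Matrix (Fin n) (Fin n) ℂ := Matrix.diagonalAlgHom ℂ
  have h1 : aeval (F d) p = F (aeval d p) := aeval_algHom_apply F d p
  have h2 : ∀ i, (aeval d p) i = p.eval (d i) := by
    intro i
    have := (aeval_algHom_apply (Pi.evalAlgHom ℂ (fun _ => ℂ) i) d p).symm
    simpa [Polynomial.aeval_def] using this
  simpa [F, funext h2] using h1

lemma exists_sqrt' {n : ℕ} (S : Matrix (Fin n) (Fin n) ℂ) (hS : IsUnit S.det) :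
    ∃ (p : ℂ[X]) (Q Q' H' : Matrix (Fin n) (Fin n) ℂ),
      aeval (Sᴴ * S) p = Q ∧ aeval H' p = Q' ∧ Qᴴ = Q ∧ Q'ᴴ = Q' ∧
      Q * Q = Sᴴ * S ∧ Q * Q' = 1 ∧ Q' * Q = 1 ∧ (Sᴴ * S) * H' = 1 := by
  have hH : (Sᴴ * S).IsHermitian := isHermitian_conjTranspose_mul_self S
  set H := Sᴴ * S with hHdef
  set ev : Fin n → ℝ := hH.eigenvalues with hev
  have hdet : IsUnit H.det := by
    rw [hHdef, det_mul, det_conjTranspose]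
    exact (hS.star).mul hS
  have hpos : ∀ i, 0 < ev i := by
    intro i
    have hnn : 0 ≤ ev i := eigenvalues_conjTranspose_mul_self_nonneg S i
    have hne : ev i ≠ 0 := by
      intro h0
      have hd := hH.det_eq_prod_eigenvalues
      have : ((ev i : ℝ) : ℂ) = 0 := by rw [h0]; simp
      rw [Finset.prod_eq_zero (Finset.mem_univ i) this] at hd
      exact hdet.ne_zero hd
    exact lt_of_le_of_ne hnn (Ne.symm hne)
  set s : Finset ℝ := (Finset.univ.image ev) ∪ (Finset.univ.image fun i => (ev i)⁻¹) with hs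
  set p : ℂ[X] := (Lagrange.interpolate s id Real.sqrt).map (algebraMap ℝ ℂ) with hp
  have hevalp : ∀ x ∈ s, p.eval ((x : ℂ)) = ((Real.sqrt x : ℝ) : ℂ) := by
    intro x hx
    have hxx : ((x : ℂ)) = algebraMap ℝ ℂ x := by simp
    rw [hp, eval_map, hxx, eval₂_at_apply]
    have := Lagrange.eval_interpolate_at_node (v := (id : ℝ → ℝ)) (r := Real.sqrt)
      (Set.injOn_id _) hx
    simp only [id] at this
    rw [this]
    simp
  set V : Matrix (Fin n) (Fin n) ℂ := (hH.eigenvectorUnitary : Matrix (Fin n) (Fin n) ℂ)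
    with hV
  have hV1 : Vᴴ * V = 1 := by
    have := hH.eigenvectorUnitary.2.1
    simpa [hV, Matrix.star_eq_conjTranspose] using this
  have hV2 : V * Vᴴ = 1 := by rw [mul_eq_one_comm]; exact hV1
  have spec : H = V * diagonal (fun i => ((ev i : ℝ) : ℂ)) * Vᴴ := hH.spectral_theorem
  have fmul : ∀ d₁ d₂ : Fin n → ℂ, (V * diagonal d₁ * Vᴴ) * (V * diagonal d₂ * Vᴴ)
      = V * diagonal (fun i => d₁ i * d₂ i) * Vᴴ := by
    intro d₁ d₂
    calc V * diagonal d₁ * Vᴴ * (V * diagonal d₂ * Vᴴ)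
        = V * diagonal d₁ * (Vᴴ * V) * (diagonal d₂ * Vᴴ) := by
          simp only [Matrix.mul_assoc]
      _ = V * (diagonal d₁ * diagonal d₂) * Vᴴ := by
          rw [hV1]; simp only [Matrix.mul_one, Matrix.mul_assoc]
      _ = V * diagonal (fun i => d₁ i * d₂ i) * Vᴴ := by
          rw [diagonal_mul_diagonal]
  have fherm : ∀ d : Fin n → ℝ,
      (V * diagonal (fun i => ((d i : ℝ) : ℂ)) * Vᴴ)ᴴ
        = V * diagonal (fun i => ((d i : ℝ) : ℂ)) * Vᴴ := by
    intro d
    have hd : (diagonal (fun i => ((d i : ℝ) : ℂ)))ᴴ = diagonal (fun i => ((d i : ℝ) : ℂ)) := by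
      rw [diagonal_conjTranspose]
      congr 1
      funext i
      simp [Pi.star_def, Complex.conj_ofReal]
    simp only [conjTranspose_mul, conjTranspose_conjTranspose, hd, Matrix.mul_assoc]
  have faeval : ∀ d : Fin n → ℂ, aeval (V * diagonal d * Vᴴ) p
      = V * diagonal (fun i => p.eval (d i)) * Vᴴ := by
    intro d
    rw [aeval_conj' V Vᴴ _ hV2 hV1, aeval_diagonal']
  have fone : V * diagonal (fun _ : Fin n => (1 : ℂ)) * Vᴴ = 1 := by
    rw [show diagonal (fun _ : Fin n => (1:ℂ)) = 1 from diagonal_one, Matrix.mul_one]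
    exact hV2
  have dcongr : ∀ (a b : Fin n → ℂ), (∀ i, a i = b i) →
      V * diagonal a * Vᴴ = V * diagonal b * Vᴴ := by
    intro a b h
    rw [funext h]
  have mem1 : ∀ i, ev i ∈ s := fun i =>
    Finset.mem_union_left _ (Finset.mem_image_of_mem _ (Finset.mem_univ i))
  have mem2 : ∀ i, (ev i)⁻¹ ∈ s := fun i =>
    Finset.mem_union_right _ (Finset.mem_image_of_mem _ (Finset.mem_univ i))
  refine ⟨p, V * diagonal (fun i => ((Real.sqrt (ev i) : ℝ) : ℂ)) * Vᴴ,
    V * diagonal (fun i => (((Real.sqrt (ev i))⁻¹ : ℝ) : ℂ)) * Vᴴ,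
    V * diagonal (fun i => (((ev i)⁻¹ : ℝ) : ℂ)) * Vᴴ,
    ?_, ?_, fherm _, fherm _, ?_, ?_, ?_, ?_⟩
  · rw [spec, faeval]
    exact dcongr _ _ fun i => hevalp (ev i) (mem1 i)
  · rw [faeval]
    exact dcongr _ _ fun i => by rw [hevalp _ (mem2 i), Real.sqrt_inv]
  · rw [fmul, spec]
    exact dcongr _ _ fun i => by
      rw [← Complex.ofReal_mul, Real.mul_self_sqrt (hpos i).le]
  · rw [fmul, ← fone]
    exact dcongr _ _ fun i => by
      rw [← Complex.ofReal_mul, mul_inv_cancel₀ (Real.sqrt_ne_zero'.2 (hpos i)),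
        Complex.ofReal_one]
  · rw [fmul, ← fone]
    exact dcongr _ _ fun i => by
      rw [← Complex.ofReal_mul, inv_mul_cancel₀ (Real.sqrt_ne_zero'.2 (hpos i)),
        Complex.ofReal_one]
  · rw [spec, fmul, ← fone]
    exact dcongr _ _ fun i => by
      rw [← Complex.ofReal_mul, mul_inv_cancel₀ (hpos i).ne', Complex.ofReal_one]

lemma key_star {n : ℕ} (A B S Bi : Matrix (Fin n) (Fin n) ℂ) (hS : IsUnit S.det)
    (hBiB : Bi * B = 1)
    (hX : B * (Sᴴ * S) * Bi * (Sᴴ * S) = 1)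
    (hA : A = S * B * Sᴴ) :
    ∃ U : Matrix (Fin n) (Fin n) ℂ, Uᴴ * U = 1 ∧ A = U * B * Uᴴ := by
  obtain ⟨p, Q, Q', H', haQ, haQ', hQh, hQ'h, hQQ, hQQ', hQ'Q, hHH'⟩ := exists_sqrt' S hS
  have hBBi : B * Bi = 1 := mul_eq_one_comm.mp hBiB
  -- B * H * Bi = H'
  have h0 : B * (Sᴴ * S) * Bi = H' := by
    calc B * (Sᴴ * S) * Bi = B * (Sᴴ * S) * Bi * ((Sᴴ * S) * H') := by rw [hHH', Matrix.mul_one]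
      _ = (B * (Sᴴ * S) * Bi * (Sᴴ * S)) * H' := by simp only [Matrix.mul_assoc]
      _ = H' := by rw [hX, Matrix.one_mul]
  have h1 : B * Q * Bi = Q' := by
    have := aeval_conj' B Bi (Sᴴ * S) hBBi hBiB p
    rw [h0, haQ, haQ'] at this
    exact this.symm
  have h2 : Q' * B = B * Q := by
    calc Q' * B = B * Q * Bi * B := by rw [h1]
      _ = B * Q * (Bi * B) := by simp only [Matrix.mul_assoc]
      _ = B * Q := by rw [hBiB, Matrix.mul_one]
  have h3 : Q' * B * Q' = B := by
    rw [h2]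
    calc B * Q * Q' = B * (Q * Q') := by simp only [Matrix.mul_assoc]
      _ = B := by rw [hQQ', Matrix.mul_one]
  refine ⟨S * Q', ?_, ?_⟩
  · calc (S * Q')ᴴ * (S * Q')
          = Q'ᴴ * (Sᴴ * S) * Q' := by
            rw [conjTranspose_mul]; simp only [Matrix.mul_assoc]
      _ = Q' * (Q * (Q * Q')) := by rw [hQ'h, ← hQQ]; simp only [Matrix.mul_assoc]
      _ = 1 := by rw [hQQ', Matrix.mul_one, hQ'Q]
  · rw [hA]
    have e1 : S * B * Sᴴ = S * (Q' * B * Q') * Sᴴ := by rw [h3]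
    rw [e1]
    calc S * (Q' * B * Q') * Sᴴ
        = S * Q' * B * (Q' * Sᴴ) := by simp only [Matrix.mul_assoc]
      _ = S * Q' * B * (S * Q')ᴴ := by rw [conjTranspose_mul, hQ'h]

lemma key_transpose {n : ℕ} (A B S Bi : Matrix (Fin n) (Fin n) ℂ) (hS : IsUnit S.det)
    (hBiB : Bi * B = 1)
    (hX : B * (Sᴴ * S)ᵀ * Bi * (Sᴴ * S) = 1)
    (hA : A = S * B * Sᵀ) :
    ∃ U : Matrix (Fin n) (Fin n) ℂ, Uᴴ * U = 1 ∧ A = U * B * Uᵀ := by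
  obtain ⟨p, Q, Q', H', haQ, haQ', hQh, hQ'h, hQQ, hQQ', hQ'Q, hHH'⟩ := exists_sqrt' S hS
  have hBBi : B * Bi = 1 := mul_eq_one_comm.mp hBiB
  have h0 : B * (Sᴴ * S)ᵀ * Bi = H' := by
    calc B * (Sᴴ * S)ᵀ * Bi
        = B * (Sᴴ * S)ᵀ * Bi * ((Sᴴ * S) * H') := by rw [hHH', Matrix.mul_one]
      _ = (B * (Sᴴ * S)ᵀ * Bi * (Sᴴ * S)) * H' := by simp only [Matrix.mul_assoc]
      _ = H' := by rw [hX, Matrix.one_mul]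
  have h1 : B * Qᵀ * Bi = Q' := by
    have h := aeval_conj' B Bi (Sᴴ * S)ᵀ hBBi hBiB p
    rw [h0, ← aeval_transpose', haQ, haQ'] at h
    exact h.symm
  have h2 : Q' * B = B * Qᵀ := by
    calc Q' * B = B * Qᵀ * Bi * B := by rw [h1]
      _ = B * Qᵀ * (Bi * B) := by simp only [Matrix.mul_assoc]
      _ = B * Qᵀ := by rw [hBiB, Matrix.mul_one]
  have h3 : Q' * B * Q'ᵀ = B := by
    rw [h2]
    calc B * Qᵀ * Q'ᵀ = B * (Q' * Q)ᵀ := by rw [transpose_mul]; simp only [Matrix.mul_assoc]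
      _ = B := by rw [hQ'Q, transpose_one, Matrix.mul_one]
  refine ⟨S * Q', ?_, ?_⟩
  · calc (S * Q')ᴴ * (S * Q')
          = Q'ᴴ * (Sᴴ * S) * Q' := by
            rw [conjTranspose_mul]; simp only [Matrix.mul_assoc]
      _ = Q' * (Q * (Q * Q')) := by rw [hQ'h, ← hQQ]; simp only [Matrix.mul_assoc]
      _ = 1 := by rw [hQQ', Matrix.mul_one, hQ'Q]
  · rw [hA]
    have e1 : S * B * Sᵀ = S * (Q' * B * Q'ᵀ) * Sᵀ := by rw [h3]
    rw [e1]
    calc S * (Q' * B * Q'ᵀ) * Sᵀ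
        = S * Q' * B * (Q'ᵀ * Sᵀ) := by simp only [Matrix.mul_assoc]
      _ = S * Q' * B * (S * Q')ᵀ := by rw [transpose_mul]

lemma unit_det_of_unitary {n : ℕ} (U : Matrix (Fin n) (Fin n) ℂ) (hU : Uᴴ * U = 1) :
    IsUnit U.det := by
  apply IsUnit.of_mul_eq_one (a := U.det) Uᴴ.det
  rw [← det_mul, mul_eq_one_comm.mp hU, det_one]

lemma ct_t {n : ℕ} (M : Matrix (Fin n) (Fin n) ℂ) : Mᵀᴴ = Mᴴᵀ := by
  ext i j; simp

lemma map_c_t {n : ℕ} (M : Matrix (Fin n) (Fin n) ℂ) :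
    Mᵀ.map (starRingEnd ℂ) = Mᴴ := by
  ext i j; simp

lemma map_c_c {n : ℕ} (M : Matrix (Fin n) (Fin n) ℂ) :
    (M.map (starRingEnd ℂ)).map (starRingEnd ℂ) = M := by
  ext i j; simp

lemma map_c_eq {n : ℕ} (M : Matrix (Fin n) (Fin n) ℂ) : M.map (starRingEnd ℂ) = Mᴴᵀ := by
  ext i j; simp

lemma map_c_mul {n : ℕ} (M N : Matrix (Fin n) (Fin n) ℂ) :
    (M * N).map (starRingEnd ℂ) = M.map (starRingEnd ℂ) * N.map (starRingEnd ℂ) :=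
  Matrix.map_mul

lemma map_c_one {n : ℕ} : (1 : Matrix (Fin n) (Fin n) ℂ).map (starRingEnd ℂ) = 1 := by
  ext i j
  by_cases h : i = j <;> simp [Matrix.one_apply, h]

/-- (a) If `A` and `B` are both unitary or both coninvolutory, then they are unitarily
congruent iff they are congruent. (b) If `A` and `B` are both unitary or both involutory,
then they are unitarily *congruent iff they are *congruent. -/
theorem stmt_10 {n : ℕ} (A B : Matrix (Fin n) (Fin n) ℂ) :
    (((Aᴴ * A = 1 ∧ Bᴴ * B = 1) ∨
        (A.map (starRingEnd ℂ) * A = 1 ∧ B.map (starRingEnd ℂ) * B = 1)) →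
      ((∃ U : Matrix (Fin n) (Fin n) ℂ, Uᴴ * U = 1 ∧ A = U * B * Uᵀ) ↔
        (∃ S : Matrix (Fin n) (Fin n) ℂ, IsUnit S.det ∧ A = S * B * Sᵀ))) ∧
    (((Aᴴ * A = 1 ∧ Bᴴ * B = 1) ∨ (A * A = 1 ∧ B * B = 1)) →
      ((∃ U : Matrix (Fin n) (Fin n) ℂ, Uᴴ * U = 1 ∧ A = U * B * Uᴴ) ↔
        (∃ S : Matrix (Fin n) (Fin n) ℂ, IsUnit S.det ∧ A = S * B * Sᴴ))) := by
  constructor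
  · -- part (a)
    intro h
    constructor
    · rintro ⟨U, hU, hAU⟩
      exact ⟨U, unit_det_of_unitary U hU, hAU⟩
    · rintro ⟨S, hS, hA⟩
      rcases h with ⟨hA1, hB1⟩ | ⟨hA1, hB1⟩
      · -- both unitary
        refine key_transpose A B S Bᴴ hS hB1 ?_ hA
        have hAA : A * Aᴴ = 1 := mul_eq_one_comm.mp hA1
        rw [hA] at hAA
        have key : S * (B * (Sᴴ * S)ᵀ * (Bᴴ * Sᴴ)) = 1 := by
          calc S * (B * (Sᴴ * S)ᵀ * (Bᴴ * Sᴴ))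
              = S * B * Sᵀ * (S * B * Sᵀ)ᴴ := by
                rw [conjTranspose_mul, conjTranspose_mul, ct_t, transpose_mul]
                simp only [Matrix.mul_assoc]
            _ = 1 := hAA
        have key2 := mul_eq_one_comm.mp key
        calc B * (Sᴴ * S)ᵀ * Bᴴ * (Sᴴ * S)
            = B * (Sᴴ * S)ᵀ * (Bᴴ * Sᴴ) * S := by simp only [Matrix.mul_assoc]
          _ = 1 := key2
      · -- both coninvolutory
        refine key_transpose A B S (B.map (starRingEnd ℂ)) hS hB1 ?_ hA
        have hAA := hA1
        rw [hA] at hAA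
        have key : S.map (starRingEnd ℂ) * (B.map (starRingEnd ℂ) * (Sᴴ * S) * B * Sᵀ) = 1 := by
          calc S.map (starRingEnd ℂ) * (B.map (starRingEnd ℂ) * (Sᴴ * S) * B * Sᵀ)
              = (S * B * Sᵀ).map (starRingEnd ℂ) * (S * B * Sᵀ) := by
                rw [map_c_mul, map_c_mul, map_c_t]
                simp only [Matrix.mul_assoc]
            _ = 1 := hAA
        have key2 := mul_eq_one_comm.mp key
        have key3 : B.map (starRingEnd ℂ) * (Sᴴ * S) * B * (Sᴴ * S)ᵀ = 1 := by
          calc B.map (starRingEnd ℂ) * (Sᴴ * S) * B * (Sᴴ * S)ᵀ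
              = B.map (starRingEnd ℂ) * (Sᴴ * S) * B * (Sᵀ * (S.map (starRingEnd ℂ))) := by
                rw [transpose_mul, ← map_c_eq]
            _ = B.map (starRingEnd ℂ) * (Sᴴ * S) * B * Sᵀ * S.map (starRingEnd ℂ) := by
                simp only [Matrix.mul_assoc]
            _ = 1 := key2
        have key4 := congrArg (fun M => M.map (starRingEnd ℂ)) key3
        simp only [map_c_mul, map_c_c, map_c_one] at key4
        have hH : (Sᴴ * S).map (starRingEnd ℂ) = (Sᴴ * S)ᵀ := by
          rw [map_c_eq, (isHermitian_conjTranspose_mul_self S).eq]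
        have hHt : ((Sᴴ * S)ᵀ).map (starRingEnd ℂ) = Sᴴ * S := by
          rw [map_c_t, (isHermitian_conjTranspose_mul_self S).eq]
        rw [← map_c_mul, hH, hHt] at key4
        exact key4
  · -- part (b)
    intro h
    constructor
    · rintro ⟨U, hU, hAU⟩
      exact ⟨U, unit_det_of_unitary U hU, hAU⟩
    · rintro ⟨S, hS, hA⟩
      rcases h with ⟨hA1, hB1⟩ | ⟨hA1, hB1⟩
      · -- both unitary
        refine key_star A B S Bᴴ hS hB1 ?_ hA
        have hAA : A * Aᴴ = 1 := mul_eq_one_comm.mp hA1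
        rw [hA] at hAA
        have key : S * (B * (Sᴴ * S) * (Bᴴ * Sᴴ)) = 1 := by
          calc S * (B * (Sᴴ * S) * (Bᴴ * Sᴴ))
              = S * B * Sᴴ * (S * B * Sᴴ)ᴴ := by
                rw [conjTranspose_mul, conjTranspose_mul, conjTranspose_conjTranspose]
                simp only [Matrix.mul_assoc]
            _ = 1 := hAA
        have key2 := mul_eq_one_comm.mp key
        calc B * (Sᴴ * S) * Bᴴ * (Sᴴ * S)
            = B * (Sᴴ * S) * (Bᴴ * Sᴴ) * S := by simp only [Matrix.mul_assoc]
          _ = 1 := key2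
      · -- both involutory
        refine key_star A B S B hS hB1 ?_ hA
        have hAA := hA1
        rw [hA] at hAA
        have key : S * (B * (Sᴴ * S) * (B * Sᴴ)) = 1 := by
          calc S * (B * (Sᴴ * S) * (B * Sᴴ))
              = S * B * Sᴴ * (S * B * Sᴴ) := by simp only [Matrix.mul_assoc]
            _ = 1 := hAA
        have key2 := mul_eq_one_comm.mp key
        calc B * (Sᴴ * S) * B * (Sᴴ * S)
            = B * (Sᴴ * S) * (B * Sᴴ) * S := by simp only [Matrix.mul_assoc]
          _ = 1 := key2
end
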